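/- The function f(x) = (2+x)·log₂(2+x) − (1+x)·log₂(1+x) on [−1, ∞) satisfies 2 + x − x² ≤ f(x) ≤ 2 + x for all x ≥ −1, with f strictly increasing and strictly concave, f(0) = 2 and f'(0) = 1. -/

import Mathlib

open Real Set

noncomputable def mfun : ℝ → ℝ := fun t => (1+t)*Real.log (1+t) - t*Real.log t - (3*t - t^2)*Real.log 2

noncomputable def Mfun : ℝ → ℝ := fun t => Real.log (1+t) - Real.log t + (2*t - 3)*Real.log 2

noncomputable def Ufun : ℝ → ℝ := fun t => (1+t)*Real.log (1+t) - t*Real.log t - (1+t)*Real.log 2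

lemma hd_shift_mul_log (a x : ℝ) (h : a + x ≠ 0) :
    HasDerivAt (fun y => (a + y) * Real.log (a + y)) (Real.log (a + x) + 1) x := by
  have h1 : HasDerivAt (fun y : ℝ => a + y) 1 x := (hasDerivAt_id x).const_add a
  simpa [Function.comp_def] using (Real.hasDerivAt_mul_log h).comp x h1

lemma hd_mfun {t : ℝ} (ht : 0 < t) : HasDerivAt mfun (Mfun t) t := by
  have h1 : HasDerivAt (fun y => (1 + y) * Real.log (1 + y)) (Real.log (1 + t) + 1) t :=
    hd_shift_mul_log 1 t (by linarith)
  have h2 : HasDerivAt (fun y : ℝ => y * Real.log y) (Real.log t + 1) t :=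
    Real.hasDerivAt_mul_log ht.ne'
  have h3 : HasDerivAt (fun y : ℝ => (3*y - y^2) * Real.log 2) ((3 - 2*t) * Real.log 2) t := by
    have := (((hasDerivAt_id t).const_mul (3:ℝ)).sub (hasDerivAt_pow 2 t)).mul_const (Real.log 2)
    simpa [pow_one] using this.congr_deriv (by ring)
  have := (h1.sub h2).sub h3
  exact this.congr_deriv (by unfold Mfun; ring)

lemma hd_Mfun {t : ℝ} (ht : 0 < t) : HasDerivAt Mfun ((1+t)⁻¹ - t⁻¹ + 2*Real.log 2) t := by
  have h1 : HasDerivAt (fun y : ℝ => Real.log (1 + y)) ((1+t)⁻¹) t := by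
    have := (Real.hasDerivAt_log (x := 1 + t) (by linarith)).comp t ((hasDerivAt_id t).const_add 1)
    simpa [Function.comp_def] using this
  have h2 : HasDerivAt Real.log t⁻¹ t := Real.hasDerivAt_log ht.ne'
  have h3 : HasDerivAt (fun y : ℝ => (2*y - 3) * Real.log 2) (2 * Real.log 2) t := by
    have := (((hasDerivAt_id t).const_mul (2:ℝ)).sub_const 3).mul_const (Real.log 2)
    simpa using this.congr_deriv (by ring)
  exact (h1.sub h2).add h3

lemma hd_Ufun {t : ℝ} (ht : 0 < t) :
    HasDerivAt Ufun (Real.log (1+t) - Real.log t - Real.log 2) t := by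
  have h1 : HasDerivAt (fun y => (1 + y) * Real.log (1 + y)) (Real.log (1 + t) + 1) t :=
    hd_shift_mul_log 1 t (by linarith)
  have h2 : HasDerivAt (fun y : ℝ => y * Real.log y) (Real.log t + 1) t :=
    Real.hasDerivAt_mul_log ht.ne'
  have h3 : HasDerivAt (fun y : ℝ => (1 + y) * Real.log 2) (Real.log 2) t := by
    simpa using (((hasDerivAt_id t).const_add (1:ℝ)).mul_const (Real.log 2))
  have := (h1.sub h2).sub h3
  exact this.congr_deriv (by ring)

lemma cont_mfun : Continuous mfun := by
  unfold mfun
  have h1 : Continuous (fun t : ℝ => (1+t) * Real.log (1+t)) :=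
    Real.continuous_mul_log.comp (continuous_const.add continuous_id)
  exact (h1.sub Real.continuous_mul_log).sub (by continuity)

lemma cont_Ufun : Continuous Ufun := by
  unfold Ufun
  have h1 : Continuous (fun t : ℝ => (1+t) * Real.log (1+t)) :=
    Real.continuous_mul_log.comp (continuous_const.add continuous_id)
  exact (h1.sub Real.continuous_mul_log).sub (by continuity)

lemma mfun_one : mfun 1 = 0 := by
  unfold mfun; norm_num [Real.log_one]

lemma Mfun_one : Mfun 1 = 0 := by
  unfold Mfun; norm_num [Real.log_one]

lemma Ufun_one : Ufun 1 = 0 := by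
  unfold Ufun; norm_num [Real.log_one]

lemma Mfun_mono : MonotoneOn Mfun (Ici (49/100 : ℝ)) := by
  apply monotoneOn_of_hasDerivWithinAt_nonneg (convex_Ici _)
    (fun x hx => (hd_Mfun (by simp at hx; linarith)).continuousAt.continuousWithinAt)
    (fun x hx => (hd_Mfun (by rw [interior_Ici] at hx; exact lt_trans (by norm_num) hx)).hasDerivWithinAt)
  intro x hx
  rw [interior_Ici] at hx
  simp only [mem_Ioi] at hx
  have hx0 : (0:ℝ) < x := by linarith
  have hkey : x⁻¹ - (1+x)⁻¹ = 1 / (x*(1+x)) := by first | (field_simp; ring) | field_simp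
  have hlog : (0.6931471803:ℝ) < Real.log 2 := Real.log_two_gt_d9
  have hpos : (0:ℝ) < x*(1+x) := by nlinarith
  have : 1 / (x*(1+x)) ≤ 2 * Real.log 2 := by
    rw [div_le_iff₀ hpos]
    nlinarith
  linarith [hkey ▸ this]

lemma mfun_anti1 : AntitoneOn mfun (Icc (49/100 : ℝ) 1) := by
  apply antitoneOn_of_hasDerivWithinAt_nonpos (convex_Icc _ _)
    (cont_mfun.continuousOn)
    (fun x hx => (hd_mfun (by rw [interior_Icc] at hx; exact lt_trans (by norm_num) hx.1)).hasDerivWithinAt)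
  intro x hx
  rw [interior_Icc] at hx
  have : Mfun x ≤ Mfun 1 := Mfun_mono (le_of_lt hx.1) (by simp; norm_num) (le_of_lt hx.2)
  rw [Mfun_one] at this
  exact this

lemma mfun_mono2 : MonotoneOn mfun (Ici (1:ℝ)) := by
  apply monotoneOn_of_hasDerivWithinAt_nonneg (convex_Ici _)
    (cont_mfun.continuousOn)
    (fun x hx => (hd_mfun (by rw [interior_Ici] at hx; exact lt_trans (by norm_num) hx)).hasDerivWithinAt)
  intro x hx
  rw [interior_Ici] at hx
  simp only [mem_Ioi] at hx
  have : Mfun 1 ≤ Mfun x := Mfun_mono (by simp; norm_num) (by simp; linarith) (le_of_lt hx)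
  rw [Mfun_one] at this
  exact this

lemma log_four : Real.log 4 = 2 * Real.log 2 := by
  rw [show (4:ℝ) = 2^2 by norm_num, Real.log_pow]; push_cast; ring

lemma mfun_anti3 : AntitoneOn mfun (Icc (1/3 : ℝ) (49/100)) := by
  apply antitoneOn_of_hasDerivWithinAt_nonpos (convex_Icc _ _)
    (cont_mfun.continuousOn)
    (fun x hx => (hd_mfun (by rw [interior_Icc] at hx; exact lt_trans (by norm_num) hx.1)).hasDerivWithinAt)
  intro x hx
  rw [interior_Icc] at hx
  obtain ⟨h1, h2⟩ := hx
  have hx0 : (0:ℝ) < x := by linarith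
  have hlog2 : (0:ℝ) < Real.log 2 := Real.log_pos (by norm_num)
  have hdivle : Real.log (1+x) - Real.log x ≤ 2 * Real.log 2 := by
    rw [← Real.log_div (by linarith) hx0.ne', ← log_four]
    apply Real.log_le_log (by positivity)
    rw [div_le_iff₀ hx0]
    linarith
  unfold Mfun
  nlinarith

lemma mfun_concave : ConcaveOn ℝ (Icc (0:ℝ) (1/3)) mfun := by
  apply concaveOn_of_hasDerivWithinAt2_nonpos (convex_Icc _ _)
    (cont_mfun.continuousOn)
    (f' := Mfun)
    (fun x hx => (hd_mfun (by rw [interior_Icc] at hx; exact hx.1)).hasDerivWithinAt)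
    (fun x hx => (hd_Mfun (by rw [interior_Icc] at hx; exact hx.1)).hasDerivWithinAt)
  intro x hx
  rw [interior_Icc] at hx
  obtain ⟨h1, h2⟩ := hx
  have hkey : x⁻¹ - (1+x)⁻¹ = 1 / (x*(1+x)) := by first | (field_simp; ring) | field_simp
  have hlog : Real.log 2 < 0.6931471808 := Real.log_two_lt_d9
  have hpos : (0:ℝ) < x*(1+x) := by nlinarith
  have : 2 * Real.log 2 ≤ 1 / (x*(1+x)) := by
    rw [le_div_iff₀ hpos]
    nlinarith
  linarith [hkey ▸ this]

lemma mfun_zero : mfun 0 = 0 := by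
  unfold mfun; simp

lemma mfun_nonneg : ∀ t : ℝ, 0 ≤ t → 0 ≤ mfun t := by
  intro t ht
  have h049 : ∀ s : ℝ, 49/100 ≤ s → 0 ≤ mfun s := by
    intro s hs
    rcases le_or_gt s 1 with h | h
    · have := mfun_anti1 ⟨hs, h⟩ (by constructor <;> norm_num) h
      rwa [mfun_one] at this
    · have := mfun_mono2 (by simp) (by simp; linarith) h.le
      rwa [mfun_one] at this
  have h13 : ∀ s : ℝ, 1/3 ≤ s → s ≤ 49/100 → 0 ≤ mfun s := by
    intro s hs hs'
    have := mfun_anti3 ⟨hs, hs'⟩ (by constructor <;> norm_num) hs'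
    exact le_trans (h049 _ le_rfl) this
  rcases le_or_gt t (1/3) with h | h
  · have hcomb := mfun_concave.2 (show (0:ℝ) ∈ Icc (0:ℝ) (1/3) by constructor <;> norm_num)
      (show (1/3:ℝ) ∈ Icc (0:ℝ) (1/3) by constructor <;> norm_num)
      (show (0:ℝ) ≤ 1 - 3*t by linarith) (show (0:ℝ) ≤ 3*t by linarith)
      (show (1 - 3*t) + 3*t = 1 by ring)
    simp only [smul_eq_mul] at hcomb
    have hteq : (1 - 3*t) * 0 + 3*t * (1/3) = t := by ring
    rw [hteq] at hcomb
    rw [mfun_zero] at hcomb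
    have h13' : 0 ≤ mfun (1/3 : ℝ) := h13 _ le_rfl (by norm_num)
    nlinarith
  · rcases le_or_gt t (49/100) with h' | h'
    · exact h13 _ h.le h'
    · exact h049 _ h'.le

lemma Ufun_nonpos : ∀ t : ℝ, 0 ≤ t → Ufun t ≤ 0 := by
  intro t ht
  have hmono : MonotoneOn Ufun (Icc (0:ℝ) 1) := by
    apply monotoneOn_of_hasDerivWithinAt_nonneg (convex_Icc _ _)
      (cont_Ufun.continuousOn)
      (fun x hx => (hd_Ufun (by rw [interior_Icc] at hx; exact hx.1)).hasDerivWithinAt)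
    intro x hx
    rw [interior_Icc] at hx
    obtain ⟨h1, h2⟩ := hx
    have : Real.log 2 ≤ Real.log (1+x) - Real.log x := by
      rw [← Real.log_div (by linarith) h1.ne']
      apply Real.log_le_log (by norm_num)
      rw [le_div_iff₀ h1]
      linarith
    linarith
  have hanti : AntitoneOn Ufun (Ici (1:ℝ)) := by
    apply antitoneOn_of_hasDerivWithinAt_nonpos (convex_Ici _)
      (cont_Ufun.continuousOn)
      (fun x hx => (hd_Ufun (by rw [interior_Ici] at hx; exact lt_trans (by norm_num) hx)).hasDerivWithinAt)
    intro x hx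
    rw [interior_Ici] at hx
    simp only [mem_Ioi] at hx
    have hx0 : (0:ℝ) < x := by linarith
    have : Real.log (1+x) - Real.log x ≤ Real.log 2 := by
      rw [← Real.log_div (by linarith) hx0.ne']
      apply Real.log_le_log (by positivity)
      rw [div_le_iff₀ hx0]
      linarith
    linarith
  rcases le_or_gt t 1 with h | h
  · have := hmono ⟨ht, h⟩ (by constructor <;> norm_num) h
    rwa [Ufun_one] at this
  · have := hanti (by simp) (by simp; linarith) h.le
    rwa [Ufun_one] at this

lemma f_eq_aux : (fun x : ℝ => (2 + x) * Real.logb 2 (2 + x) - (1 + x) * Real.logb 2 (1 + x))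
    = fun x : ℝ => ((2 + x) * Real.log (2 + x) - (1 + x) * Real.log (1 + x)) / Real.log 2 := by
  funext x
  simp only [Real.logb]
  ring

lemma hd_f {x : ℝ} (hx : -1 < x) :
    HasDerivAt (fun x : ℝ => (2 + x) * Real.logb 2 (2 + x) - (1 + x) * Real.logb 2 (1 + x))
      ((Real.log (2 + x) - Real.log (1 + x)) / Real.log 2) x := by
  rw [f_eq_aux]
  exact (((hd_shift_mul_log 2 x (by linarith)).sub (hd_shift_mul_log 1 x (by linarith))).div_const
    (Real.log 2)).congr_deriv (by ring)

lemma cont_f : Continuous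
    (fun x : ℝ => (2 + x) * Real.logb 2 (2 + x) - (1 + x) * Real.logb 2 (1 + x)) := by
  rw [f_eq_aux]
  have h1 : Continuous (fun x : ℝ => (2+x) * Real.log (2+x)) :=
    Real.continuous_mul_log.comp (continuous_const.add continuous_id)
  have h2 : Continuous (fun x : ℝ => (1+x) * Real.log (1+x)) :=
    Real.continuous_mul_log.comp (continuous_const.add continuous_id)
  exact (h1.sub h2).div_const _

/-- the function `f(x) = (2+x)·log₂(2+x) − (1+x)·log₂(1+x)` on `[−1,∞)`
satisfies `2 + x − x² ≤ f(x) ≤ 2 + x`, is strictly increasing and strictly concave on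
`[−1,∞)`, and satisfies `f(0) = 2` and `f'(0) = 1`. -/
theorem geometric_entropy_function_properties :
    let f : ℝ → ℝ := fun x => (2 + x) * Real.logb 2 (2 + x) - (1 + x) * Real.logb 2 (1 + x)
    (∀ x : ℝ, -1 ≤ x → 2 + x - x ^ 2 ≤ f x ∧ f x ≤ 2 + x) ∧
    StrictMonoOn f (Set.Ici (-1 : ℝ)) ∧
    StrictConcaveOn ℝ (Set.Ici (-1 : ℝ)) f ∧
    f 0 = 2 ∧ deriv f 0 = 1 := by
  intro f
  have hlog2 : (0:ℝ) < Real.log 2 := Real.log_pos (by norm_num)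
  constructor
  · -- bounds
    intro x hx
    have ht : (0:ℝ) ≤ 1 + x := by linarith
    have heq : (1:ℝ) + (1 + x) = 2 + x := by ring
    constructor
    · have hm := mfun_nonneg (1+x) ht
      unfold mfun at hm
      rw [heq] at hm
      show 2 + x - x^2 ≤ f x
      have : f x = ((2 + x) * Real.log (2 + x) - (1 + x) * Real.log (1 + x)) / Real.log 2 := by
        rw [show f = _ from f_eq_aux]
      rw [this, le_div_iff₀ hlog2]
      nlinarith [hm]
    · have hu := Ufun_nonpos (1+x) ht
      unfold Ufun at hu
      rw [heq] at hu
      show f x ≤ 2 + x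
      have : f x = ((2 + x) * Real.log (2 + x) - (1 + x) * Real.log (1 + x)) / Real.log 2 := by
        rw [show f = _ from f_eq_aux]
      rw [this, div_le_iff₀ hlog2]
      nlinarith [hu]
  refine ⟨?_, ?_, ?_, ?_⟩
  · -- strict mono
    apply strictMonoOn_of_hasDerivWithinAt_pos (convex_Ici _) cont_f.continuousOn
      (f' := fun x => (Real.log (2 + x) - Real.log (1 + x)) / Real.log 2)
      (fun x hx => (hd_f (by rw [interior_Ici] at hx; exact hx)).hasDerivWithinAt)
    intro x hx
    rw [interior_Ici] at hx
    have hx' : (-1:ℝ) < x := hx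
    apply div_pos _ hlog2
    have := Real.log_lt_log (by linarith : (0:ℝ) < 1 + x) (by linarith : (1:ℝ) + x < 2 + x)
    linarith
  · -- strict concave
    apply StrictAntiOn.strictConcaveOn_of_deriv (convex_Ici _) cont_f.continuousOn
    rw [interior_Ici]
    have heq : Set.EqOn (deriv f) (fun x => (Real.log (2 + x) - Real.log (1 + x)) / Real.log 2)
        (Set.Ioi (-1:ℝ)) :=
      deriv_eqOn isOpen_Ioi (fun x hx => (hd_f hx).hasDerivWithinAt)
    intro x hx y hy hxy
    rw [heq hx, heq hy]
    have hx1 : (0:ℝ) < 1 + x := by simp only [Set.mem_Ioi] at hx; linarith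
    have hy1 : (0:ℝ) < 1 + y := by simp only [Set.mem_Ioi] at hy; linarith
    rw [div_lt_div_iff_of_pos_right hlog2]
    have h2x : (0:ℝ) < 2 + x := by linarith
    have h2y : (0:ℝ) < 2 + y := by linarith
    have hprod : (2+y)*(1+x) < (2+x)*(1+y) := by nlinarith
    have hll := Real.log_lt_log (by positivity) hprod
    rw [Real.log_mul h2y.ne' hx1.ne', Real.log_mul h2x.ne' hy1.ne'] at hll
    linarith
  · -- f 0 = 2
    show (2+0) * Real.logb 2 (2+0) - (1+0) * Real.logb 2 (1+0) = 2
    norm_num [Real.logb_self_eq_one]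
  · -- deriv f 0 = 1
    have := (hd_f (by norm_num : (-1:ℝ) < 0)).deriv
    rw [this]
    norm_num [Real.log_one]
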